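/- Let e be a vital edge and C(e) any mincut for e. Then e is the only possible loose edge among the contributing edges of C(e); that is, every contributing edge of C(e) other than e is saturated in some maximum (s,t)-flow. -/
import Mathlib


open Finset

variable {V : Type*} [Fintype V] [DecidableEq V]

/-- capacity of the cut given by the source-side vertex set `C`:
total capacity of edges with tail in `C` and head outside `C`. -/
noncomputable def cutCap (E : Finset (V × V)) (w : V × V → ℝ) (C : Finset V) : ℝ :=
  ∑ e ∈ E.filter (fun e => e.1 ∈ C ∧ e.2 ∉ C), w e

/-- `C` is an (s,t)-cut. -/
def IsCut (s t : V) (C : Finset V) : Prop := s ∈ C ∧ t ∉ C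

/-- edge `e` is a contributing (outgoing) edge of the cut `C`. -/
def Contributes (e : V × V) (C : Finset V) : Prop := e.1 ∈ C ∧ e.2 ∉ C

/-- `f` is a feasible (s,t)-flow on edge set `E` with capacities `w`. -/
structure IsFlow (E : Finset (V × V)) (w : V × V → ℝ) (s t : V) (f : V × V → ℝ) : Prop where
  nonneg : ∀ e ∈ E, 0 ≤ f e
  le_cap : ∀ e ∈ E, f e ≤ w e
  support : ∀ e, e ∉ E → f e = 0
  conserve : ∀ v, v ≠ s → v ≠ t →
    ∑ e ∈ E.filter (fun e => e.1 = v), f e = ∑ e ∈ E.filter (fun e => e.2 = v), f e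

/-- value of an (s,t)-flow: the net flow out of `s`. -/
noncomputable def flowValue (E : Finset (V × V)) (s : V) (f : V × V → ℝ) : ℝ :=
  ∑ e ∈ E.filter (fun e => e.1 = s), f e - ∑ e ∈ E.filter (fun e => e.2 = s), f e

/-- `f` is a maximum (s,t)-flow. -/
def IsMaxFlow (E : Finset (V × V)) (w : V × V → ℝ) (s t : V) (f : V × V → ℝ) : Prop :=
  IsFlow E w s t f ∧ ∀ g, IsFlow E w s t g → flowValue E s g ≤ flowValue E s f

/-- capacity of a minimum (s,t)-cut. -/
noncomputable def minCutCap (E : Finset (V × V)) (w : V × V → ℝ) (s t : V) : ℝ :=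
  sInf {x | ∃ C : Finset V, IsCut s t C ∧ cutCap E w C = x}

/-- `e` is a vital edge: deleting it strictly decreases the min (s,t)-cut capacity. -/
def Vital (E : Finset (V × V)) (w : V × V → ℝ) (s t : V) (e : V × V) : Prop :=
  e ∈ E ∧ minCutCap (E.erase e) w s t < minCutCap E w s t

/-- `C` is a mincut for the edge `e`: a least-capacity (s,t)-cut in which `e` contributes. -/
def IsMincutFor (E : Finset (V × V)) (w : V × V → ℝ) (s t : V) (e : V × V)
    (C : Finset V) : Prop :=
  IsCut s t C ∧ Contributes e C ∧
    ∀ C', IsCut s t C' → Contributes e C' → cutCap E w C ≤ cutCap E w C'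

/-- total flow on edges leaving the cut `C`. -/
noncomputable def flowOut (E : Finset (V × V)) (f : V × V → ℝ) (C : Finset V) : ℝ :=
  ∑ e ∈ E.filter (fun e => e.1 ∈ C ∧ e.2 ∉ C), f e

/-- total flow on edges entering the cut `C`. -/
noncomputable def flowIn (E : Finset (V × V)) (f : V × V → ℝ) (C : Finset V) : ℝ :=
  ∑ e ∈ E.filter (fun e => e.1 ∉ C ∧ e.2 ∈ C), f e

set_option linter.unusedSectionVars false
section MFMCAux

variable {V : Type*} [Fintype V] [DecidableEq V]

/-- net flow out of a vertex. -/
noncomputable def netOut (E : Finset (V × V)) (f : V × V → ℝ) (v : V) : ℝ :=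
  ∑ e ∈ E.filter (fun e => e.1 = v), f e - ∑ e ∈ E.filter (fun e => e.2 = v), f e

lemma flowValue_eq_netOut (E : Finset (V × V)) (s : V) (f : V × V → ℝ) :
    flowValue E s f = netOut E f s := rfl

lemma sum_netOut_eq (E : Finset (V × V)) (f : V × V → ℝ) (C : Finset V) :
    ∑ v ∈ C, netOut E f v = flowOut E f C - flowIn E f C := by
  classical
  have key : ∀ (p : V × V → V), ∑ v ∈ C, ∑ e ∈ E.filter (fun e => p e = v), f e
      = ∑ e ∈ E, if p e ∈ C then f e else 0 := by
    intro p
    simp only [Finset.sum_filter]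
    rw [Finset.sum_comm]
    exact Finset.sum_congr rfl fun e _ => Finset.sum_ite_eq C (p e) (fun _ => f e)
  unfold netOut flowOut flowIn
  rw [Finset.sum_sub_distrib, key (fun e => e.1), key (fun e => e.2),
      Finset.sum_filter, Finset.sum_filter, ← Finset.sum_sub_distrib, ← Finset.sum_sub_distrib]
  refine Finset.sum_congr rfl fun e _ => ?_
  by_cases h1 : e.1 ∈ C <;> by_cases h2 : e.2 ∈ C <;> simp [h1, h2]

lemma value_eq_out_sub_in {E : Finset (V × V)} {w : V × V → ℝ} {s t : V} {f : V × V → ℝ}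
    (hf : IsFlow E w s t f) {C : Finset V} (hC : IsCut s t C) :
    flowValue E s f = flowOut E f C - flowIn E f C := by
  rw [← sum_netOut_eq, Finset.sum_eq_single_of_mem s hC.1]
  · rfl
  · intro v hv hvs
    have ht : v ≠ t := fun h => hC.2 (h ▸ hv)
    have := hf.conserve v hvs ht
    simp [netOut, this]

lemma flowOut_le_cutCap {E : Finset (V × V)} {w : V × V → ℝ} {s t : V} {f : V × V → ℝ}
    (hf : IsFlow E w s t f) (C : Finset V) : flowOut E f C ≤ cutCap E w C :=
  Finset.sum_le_sum fun e he => hf.le_cap e (Finset.mem_filter.1 he).1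

lemma flowIn_nonneg {E : Finset (V × V)} {w : V × V → ℝ} {s t : V} {f : V × V → ℝ}
    (hf : IsFlow E w s t f) (C : Finset V) : 0 ≤ flowIn E f C :=
  Finset.sum_nonneg fun e he => hf.nonneg e (Finset.mem_filter.1 he).1

lemma value_le_cutCap {E : Finset (V × V)} {w : V × V → ℝ} {s t : V} {f : V × V → ℝ}
    (hf : IsFlow E w s t f) {C : Finset V} (hC : IsCut s t C) :
    flowValue E s f ≤ cutCap E w C := by
  rw [value_eq_out_sub_in hf hC]
  have := flowIn_nonneg hf C
  have := flowOut_le_cutCap hf C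
  linarith

lemma cutCap_nonneg {E : Finset (V × V)} {w : V × V → ℝ} (hw : ∀ e ∈ E, 0 ≤ w e)
    (C : Finset V) : 0 ≤ cutCap E w C :=
  Finset.sum_nonneg fun e he => hw e (Finset.mem_filter.1 he).1

end MFMCAux
section MFMCAug

set_option linter.unusedSectionVars false

variable {V : Type*} [Fintype V] [DecidableEq V]

lemma sum_update_eq (S : Finset (V × V)) (g : V × V → ℝ) (e₀ : V × V) (x : ℝ) :
    ∑ e ∈ S, Function.update g e₀ x e = (∑ e ∈ S, g e) + (if e₀ ∈ S then x - g e₀ else 0) := by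
  by_cases h : e₀ ∈ S
  · rw [Finset.sum_update_of_mem h, if_pos h, ← Finset.sum_erase_add S g h,
      Finset.sdiff_singleton_eq_erase]
    ring
  · rw [if_neg h, add_zero]
    exact Finset.sum_congr rfl fun e he =>
      Function.update_of_ne (by rintro rfl; exact h he) _ _

lemma netOut_update (E : Finset (V × V)) (g : V × V → ℝ) {e₀ : V × V} (he₀ : e₀ ∈ E)
    (x : ℝ) (v : V) :
    netOut E (Function.update g e₀ x) v = netOut E g v
      + (x - g e₀) * ((if e₀.1 = v then 1 else 0) - (if e₀.2 = v then 1 else 0)) := by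
  unfold netOut
  rw [sum_update_eq, sum_update_eq]
  simp only [Finset.mem_filter, he₀, true_and]
  split_ifs <;> ring

/-- residual relation for flow `f`: either a forward edge with slack, or a backward
edge with positive flow. -/
def Res (E : Finset (V × V)) (w : V × V → ℝ) (f : V × V → ℝ) (a b : V) : Prop :=
  ((a, b) ∈ E ∧ f (a, b) < w (a, b)) ∨ ((b, a) ∈ E ∧ 0 < f (b, a))

lemma augment {E : Finset (V × V)} {w : V × V → ℝ} {s t : V} {f : V × V → ℝ}
    (hf : IsFlow E w s t f) {a : V}
    (h : Relation.ReflTransGen (Res E w f) a t) :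
    ∀ δ > 0, ∃ g ε, 0 < ε ∧ ε ≤ δ ∧
      (∀ e ∈ E, 0 ≤ g e ∧ g e ≤ w e) ∧ (∀ e, e ∉ E → g e = 0) ∧
      (∀ e, |g e - f e| ≤ δ) ∧
      (∀ v, netOut E g v = netOut E f v
        + ε * ((if a = v then 1 else 0) - (if t = v then 1 else 0))) := by
  classical
  induction h using Relation.ReflTransGen.head_induction_on with
  | refl =>
    intro δ hδ
    exact ⟨f, δ, hδ, le_refl δ, fun e he => ⟨hf.nonneg e he, hf.le_cap e he⟩, hf.support,
      fun e => by simp [le_of_lt hδ], fun v => by ring⟩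
  | @head a c hab hbt ih =>
    intro δ hδ
    rcases hab with ⟨hmem, hlt⟩ | ⟨hmem, hlt⟩
    · -- forward edge (a, c)
      set cv := w (a, c) - f (a, c) with hcv
      have hcvpos : 0 < cv := by simp [hcv]; linarith
      obtain ⟨g, ε, hε, hεle, hbd, hsup, hclose, hdiv⟩ := ih (min δ cv / 2) (by positivity)
      refine ⟨Function.update g (a, c) (g (a, c) + ε), ε, hε, ?_, ?_, ?_, ?_, ?_⟩
      · calc ε ≤ min δ cv / 2 := hεle
          _ ≤ δ := by have := min_le_left δ cv; linarith
      · intro e he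
        by_cases hc : e = (a, c)
        · subst hc
          rw [Function.update_self]
          have h1 := (hbd _ hmem).1
          have h2 := abs_le.1 (hclose (a, c))
          have h3 : min δ cv ≤ cv := min_le_right δ cv
          constructor
          · linarith
          · simp only [hcv] at *; linarith
        · rw [Function.update_of_ne hc]; exact hbd e he
      · intro e he
        rw [Function.update_of_ne (by rintro rfl; exact he hmem)]
        exact hsup e he
      · intro e
        by_cases hc : e = (a, c)
        · subst hc
          rw [Function.update_self]
          have h2 := abs_le.1 (hclose (a, c))
          have h3 : min δ cv ≤ δ := min_le_left δ cv
          rw [abs_le]; constructor <;> linarith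
        · rw [Function.update_of_ne hc]
          calc |g e - f e| ≤ min δ cv / 2 := hclose e
            _ ≤ δ := by have := min_le_left δ cv; linarith
      · intro v
        rw [netOut_update E g hmem _ v, hdiv v]
        dsimp only
        ring
    · -- backward edge (c, a)
      set cv := f (c, a) with hcv
      have hcvpos : 0 < cv := hlt
      obtain ⟨g, ε, hε, hεle, hbd, hsup, hclose, hdiv⟩ := ih (min δ cv / 2) (by positivity)
      refine ⟨Function.update g (c, a) (g (c, a) - ε), ε, hε, ?_, ?_, ?_, ?_, ?_⟩
      · calc ε ≤ min δ cv / 2 := hεle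
          _ ≤ δ := by have := min_le_left δ cv; linarith
      · intro e he
        by_cases hc : e = (c, a)
        · subst hc
          rw [Function.update_self]
          have h1 := (hbd _ hmem).2
          have h2 := abs_le.1 (hclose (c, a))
          have h3 : min δ cv ≤ cv := min_le_right δ cv
          constructor
          · simp only [hcv] at *; linarith
          · linarith
        · rw [Function.update_of_ne hc]; exact hbd e he
      · intro e he
        rw [Function.update_of_ne (by rintro rfl; exact he hmem)]
        exact hsup e he
      · intro e
        by_cases hc : e = (c, a)
        · subst hc
          rw [Function.update_self]
          have h2 := abs_le.1 (hclose (c, a))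
          have h3 : min δ cv ≤ δ := min_le_left δ cv
          rw [abs_le]; constructor <;> linarith
        · rw [Function.update_of_ne hc]
          calc |g e - f e| ≤ min δ cv / 2 := hclose e
            _ ≤ δ := by have := min_le_left δ cv; linarith
      · intro v
        rw [netOut_update E g hmem _ v, hdiv v]
        dsimp only
        ring

end MFMCAug
section MFMCMain

set_option linter.unusedSectionVars false

variable {V : Type*} [Fintype V] [DecidableEq V]

lemma maxflow_exists (E : Finset (V × V)) (w : V × V → ℝ) (s t : V)
    (hw : ∀ e ∈ E, 0 ≤ w e) : ∃ f, IsMaxFlow E w s t f := by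
  classical
  set K : Set (V × V → ℝ) := {f | IsFlow E w s t f} with hK
  have hKne : K.Nonempty := by
    refine ⟨0, ?_⟩
    constructor
    · intro e _; simp
    · intro e he; simpa using hw e he
    · intro e _; rfl
    · intro v _ _; simp
  have hKclosed : IsClosed K := by
    have h1 : IsClosed {f : V × V → ℝ | ∀ e ∈ E, 0 ≤ f e} := by
      have : {f : V × V → ℝ | ∀ e ∈ E, 0 ≤ f e}
          = ⋂ e, ⋂ (_ : e ∈ E), {f : V × V → ℝ | 0 ≤ f e} := by ext; simp
      rw [this]
      exact isClosed_iInter fun e => isClosed_iInter fun _ =>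
        isClosed_le continuous_const (continuous_apply e)
    have h2 : IsClosed {f : V × V → ℝ | ∀ e ∈ E, f e ≤ w e} := by
      have : {f : V × V → ℝ | ∀ e ∈ E, f e ≤ w e}
          = ⋂ e, ⋂ (_ : e ∈ E), {f : V × V → ℝ | f e ≤ w e} := by ext; simp
      rw [this]
      exact isClosed_iInter fun e => isClosed_iInter fun _ =>
        isClosed_le (continuous_apply e) continuous_const
    have h3 : IsClosed {f : V × V → ℝ | ∀ e, e ∉ E → f e = 0} := by
      have : {f : V × V → ℝ | ∀ e, e ∉ E → f e = 0}
          = ⋂ e, ⋂ (_ : e ∉ E), {f : V × V → ℝ | f e = 0} := by ext; simp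
      rw [this]
      exact isClosed_iInter fun e => isClosed_iInter fun _ =>
        isClosed_eq (continuous_apply e) continuous_const
    have h4 : IsClosed {f : V × V → ℝ | ∀ v, v ≠ s → v ≠ t →
        ∑ e ∈ E.filter (fun e => e.1 = v), f e = ∑ e ∈ E.filter (fun e => e.2 = v), f e} := by
      have : {f : V × V → ℝ | ∀ v, v ≠ s → v ≠ t →
          ∑ e ∈ E.filter (fun e => e.1 = v), f e = ∑ e ∈ E.filter (fun e => e.2 = v), f e}
          = ⋂ v, ⋂ (_ : v ≠ s), ⋂ (_ : v ≠ t), {f : V × V → ℝ |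
          ∑ e ∈ E.filter (fun e => e.1 = v), f e = ∑ e ∈ E.filter (fun e => e.2 = v), f e} := by
        ext; simp
      rw [this]
      exact isClosed_iInter fun v => isClosed_iInter fun _ => isClosed_iInter fun _ =>
        isClosed_eq (continuous_finset_sum _ fun e _ => continuous_apply e)
          (continuous_finset_sum _ fun e _ => continuous_apply e)
    have : K = {f : V × V → ℝ | ∀ e ∈ E, 0 ≤ f e} ∩ {f | ∀ e ∈ E, f e ≤ w e} ∩
        {f | ∀ e, e ∉ E → f e = 0} ∩ {f | ∀ v, v ≠ s → v ≠ t →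
        ∑ e ∈ E.filter (fun e => e.1 = v), f e = ∑ e ∈ E.filter (fun e => e.2 = v), f e} := by
      ext f
      exact ⟨fun h => ⟨⟨⟨h.nonneg, h.le_cap⟩, h.support⟩, h.conserve⟩,
        fun ⟨⟨⟨a, b⟩, c⟩, d⟩ => ⟨a, b, c, d⟩⟩
    rw [this]
    exact ((h1.inter h2).inter h3).inter h4
  have hKsub : K ⊆ Set.Icc (fun _ => (0 : ℝ)) (fun e => if e ∈ E then w e else 0) := by
    intro f hf
    constructor
    · intro e
      by_cases he : e ∈ E
      · exact hf.nonneg e he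
      · simp [hf.support e he]
    · intro e
      by_cases he : e ∈ E
      · simpa [he] using hf.le_cap e he
      · simp [he, hf.support e he]
  have hKcpt : IsCompact K := IsCompact.of_isClosed_subset isCompact_Icc hKclosed hKsub
  have hcont : Continuous (flowValue E s) := by
    unfold flowValue
    exact Continuous.sub (continuous_finset_sum _ fun e _ => continuous_apply e)
      (continuous_finset_sum _ fun e _ => continuous_apply e)
  obtain ⟨f, hfK, hfmax⟩ := hKcpt.exists_isMaxOn hKne hcont.continuousOn
  exact ⟨f, hfK, fun g hg => hfmax hg⟩

/-- max-flow-min-cut (the crucial direction): there is a maximum flow and a cut whose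
capacity equals its value. -/
lemma mfmc (E : Finset (V × V)) (w : V × V → ℝ) (s t : V) (hst : s ≠ t)
    (hw : ∀ e ∈ E, 0 ≤ w e) :
    ∃ f C₀, IsMaxFlow E w s t f ∧ IsCut s t C₀ ∧ cutCap E w C₀ = flowValue E s f := by
  classical
  obtain ⟨f, hf⟩ := maxflow_exists E w s t hw
  set C₀ : Finset V := Finset.univ.filter (fun v => Relation.ReflTransGen (Res E w f) s v)
    with hC₀
  have hmemC₀ : ∀ v, v ∈ C₀ ↔ Relation.ReflTransGen (Res E w f) s v := by
    intro v; simp [hC₀]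
  have hsC : s ∈ C₀ := (hmemC₀ s).2 Relation.ReflTransGen.refl
  have htC : t ∉ C₀ := by
    intro ht
    obtain ⟨g, ε, hε, _, hbd, hsup, _, hdiv⟩ := augment hf.1 ((hmemC₀ t).1 ht) 1 one_pos
    have hgflow : IsFlow E w s t g := by
      constructor
      · exact fun e he => (hbd e he).1
      · exact fun e he => (hbd e he).2
      · exact hsup
      · intro v hv1 hv2
        have h := hdiv v
        rw [if_neg (fun h' => hv1 h'.symm), if_neg (fun h' => hv2 h'.symm)] at h
        have h0 := hf.1.conserve v hv1 hv2
        have : netOut E g v = netOut E f v := by rw [h]; ring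
        unfold netOut at this
        linarith
    have hval : flowValue E s g = flowValue E s f + ε := by
      rw [flowValue_eq_netOut, flowValue_eq_netOut, hdiv s, if_pos rfl,
        if_neg (fun h' => hst h'.symm)]
      ring
    have := hf.2 g hgflow
    linarith
  have hcut : IsCut s t C₀ := ⟨hsC, htC⟩
  refine ⟨f, C₀, hf, hcut, ?_⟩
  have hsat : ∀ e ∈ E.filter (fun e => e.1 ∈ C₀ ∧ e.2 ∉ C₀), f e = w e := by
    intro e he
    obtain ⟨heE, h1, h2⟩ := Finset.mem_filter.1 he
    rcases lt_or_eq_of_le (hf.1.le_cap e heE) with hlt | heq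
    · exfalso
      apply h2
      refine (hmemC₀ _).2 (Relation.ReflTransGen.tail ((hmemC₀ _).1 h1) ?_)
      exact Or.inl ⟨by simpa using heE, by simpa using hlt⟩
    · exact heq
  have hzero : ∀ e ∈ E.filter (fun e => e.1 ∉ C₀ ∧ e.2 ∈ C₀), f e = 0 := by
    intro e he
    obtain ⟨heE, h1, h2⟩ := Finset.mem_filter.1 he
    rcases lt_or_eq_of_le (hf.1.nonneg e heE) with hlt | heq
    · exfalso
      apply h1
      refine (hmemC₀ _).2 (Relation.ReflTransGen.tail ((hmemC₀ _).1 h2) ?_)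
      exact Or.inr ⟨by simpa using heE, by simpa using hlt⟩
    · exact heq.symm
  have hout : flowOut E f C₀ = cutCap E w C₀ := Finset.sum_congr rfl hsat
  have hin : flowIn E f C₀ = 0 := Finset.sum_eq_zero hzero
  rw [value_eq_out_sub_in hf.1 hcut, hout, hin]
  ring

end MFMCMain
section MinCutAux

set_option linter.unusedSectionVars false

variable {V : Type*} [Fintype V] [DecidableEq V]

lemma cutVals_nonempty (E : Finset (V × V)) (w : V × V → ℝ) {s t : V} (hst : s ≠ t) :
    {x | ∃ C : Finset V, IsCut s t C ∧ cutCap E w C = x}.Nonempty := by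
  refine ⟨cutCap E w {s}, {s}, ⟨Finset.mem_singleton_self s, ?_⟩, rfl⟩
  simp [Finset.mem_singleton]
  exact fun h => hst h.symm

lemma cutVals_bddBelow (E : Finset (V × V)) {w : V × V → ℝ} (hw : ∀ e ∈ E, 0 ≤ w e)
    (s t : V) : BddBelow {x | ∃ C : Finset V, IsCut s t C ∧ cutCap E w C = x} := by
  refine ⟨0, ?_⟩
  rintro x ⟨C, _, rfl⟩
  exact cutCap_nonneg hw C

lemma minCutCap_le (E : Finset (V × V)) {w : V × V → ℝ} (hw : ∀ e ∈ E, 0 ≤ w e)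
    {s t : V} {C : Finset V} (hC : IsCut s t C) : minCutCap E w s t ≤ cutCap E w C :=
  csInf_le (cutVals_bddBelow E hw s t) ⟨C, hC, rfl⟩

lemma le_minCutCap (E : Finset (V × V)) (w : V × V → ℝ) {s t : V} (hst : s ≠ t) {x : ℝ}
    (h : ∀ C : Finset V, IsCut s t C → x ≤ cutCap E w C) : x ≤ minCutCap E w s t := by
  refine le_csInf (cutVals_nonempty E w hst) ?_
  rintro b ⟨C, hC, rfl⟩
  exact h C hC

lemma minCutCap_attained (E : Finset (V × V)) (w : V × V → ℝ) {s t : V} (hst : s ≠ t) :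
    ∃ C : Finset V, IsCut s t C ∧ cutCap E w C = minCutCap E w s t := by
  classical
  have hfin : {x | ∃ C : Finset V, IsCut s t C ∧ cutCap E w C = x}.Finite := by
    have : {x | ∃ C : Finset V, IsCut s t C ∧ cutCap E w C = x}
        = cutCap E w '' {C : Finset V | IsCut s t C} := by
      ext x
      simp [Set.mem_image]
    rw [this]
    exact (Set.toFinite _).image _
  have := (cutVals_nonempty E w hst).csInf_mem hfin
  exact this

end MinCutAux
/-- every contributing edge of a mincut for a vital edge `e`, other than `e` itself,
is saturated in some maximum (s,t)-flow (i.e. `e` is the only possible loose edge). -/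
theorem at_most_one_loose_edge_in_mincut (E : Finset (V × V)) (w : V × V → ℝ) (s t : V)
    (hst : s ≠ t) (hpos : ∀ e ∈ E, 0 < w e) (e : V × V)
    (hvit : Vital E w s t e) (C : Finset V) (hC : IsMincutFor E w s t e C) :
    ∀ e' ∈ E, Contributes e' C → e' ≠ e →
      ∃ f, IsMaxFlow E w s t f ∧ f e' = w e' := by
  classical
  intro e' he' hcon' hne'
  obtain ⟨heE, hvlt⟩ := hvit
  obtain ⟨hcutC, hconE, hminC⟩ := hC
  have hw0 : ∀ a ∈ E, 0 ≤ w a := fun a ha => (hpos a ha).le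
  have hw0' : ∀ a ∈ E.erase e, 0 ≤ w a := fun a ha => hw0 a (Finset.mem_of_mem_erase ha)
  set M := minCutCap E w s t with hM
  set δ : ℝ := cutCap E w C - M with hδ
  have hδ0 : 0 ≤ δ := by
    have := minCutCap_le E hw0 hcutC
    simp [hδ]; linarith
  -- the min cut for the erased graph
  obtain ⟨D, hDcut, hDval⟩ := minCutCap_attained (E.erase e) w hst
  have hDcontrib : Contributes e D := by
    by_contra hnc
    have h1 : cutCap (E.erase e) w D = cutCap E w D := by
      unfold cutCap
      rw [Finset.filter_erase, Finset.erase_eq_of_notMem]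
      intro hmem
      exact hnc ⟨(Finset.mem_filter.1 hmem).2.1, (Finset.mem_filter.1 hmem).2.2⟩
    have h2 : M ≤ cutCap E w D := minCutCap_le E hw0 hDcut
    rw [h1] at hDval
    linarith
  have hkey : cutCap E w C - w e ≤ minCutCap (E.erase e) w s t := by
    rw [← hDval]
    have h1 : cutCap (E.erase e) w D = cutCap E w D - w e := by
      unfold cutCap
      rw [Finset.filter_erase, Finset.sum_erase_eq_sub]
      exact Finset.mem_filter.2 ⟨heE, hDcontrib.1, hDcontrib.2⟩
    rw [h1]
    have := hminC D hDcut hDcontrib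
    linarith
  have hδlt : δ < w e := by simp [hδ]; linarith
  -- perturbed capacities
  set w' : V × V → ℝ := Function.update w e (w e - δ) with hw'
  have hw'pos : ∀ a ∈ E, 0 ≤ w' a := by
    intro a ha
    by_cases h : a = e
    · subst h; rw [hw', Function.update_self]; linarith
    · rw [hw', Function.update_of_ne h]; exact hw0 a ha
  have hw'le : ∀ a, w' a ≤ w a := by
    intro a
    by_cases h : a = e
    · subst h; rw [hw', Function.update_self]; linarith
    · rw [hw', Function.update_of_ne h]
  have hcutCap' : ∀ C' : Finset V, cutCap E w' C'
      = cutCap E w C' - (if e ∈ E.filter (fun a => a.1 ∈ C' ∧ a.2 ∉ C') then δ else 0) := by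
    intro C'
    unfold cutCap
    rw [hw', sum_update_eq]
    split_ifs <;> ring
  have hcapC : cutCap E w' C = M := by
    rw [hcutCap' C, if_pos (Finset.mem_filter.2 ⟨heE, hconE.1, hconE.2⟩)]
    simp [hδ]
  have hlb : ∀ C' : Finset V, IsCut s t C' → M ≤ cutCap E w' C' := by
    intro C' hC'
    rw [hcutCap' C']
    by_cases h : e ∈ E.filter (fun a => a.1 ∈ C' ∧ a.2 ∉ C')
    · rw [if_pos h]
      have hcon : Contributes e C' := ⟨(Finset.mem_filter.1 h).2.1, (Finset.mem_filter.1 h).2.2⟩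
      have := hminC C' hC' hcon
      simp [hδ]; linarith
    · rw [if_neg h]
      have := minCutCap_le E hw0 hC'
      linarith
  -- max flow for the perturbed capacities
  obtain ⟨f, C₀, hfmax', hcut₀, hcap₀⟩ := mfmc E w' s t hst hw'pos
  have hvalM : flowValue E s f = M := by
    have h1 : flowValue E s f ≤ M := by
      have := value_le_cutCap hfmax'.1 hcutC
      rwa [hcapC] at this
    have h2 : M ≤ flowValue E s f := by
      rw [← hcap₀]
      exact hlb C₀ hcut₀
    linarith
  have hfflow : IsFlow E w s t f :=
    ⟨hfmax'.1.nonneg, fun a ha => le_trans (hfmax'.1.le_cap a ha) (hw'le a),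
      hfmax'.1.support, hfmax'.1.conserve⟩
  have hfmax : IsMaxFlow E w s t f := by
    refine ⟨hfflow, fun g hg => ?_⟩
    rw [hvalM, hM]
    exact le_minCutCap E w hst fun C' hC' => value_le_cutCap hg hC'
  refine ⟨f, hfmax, ?_⟩
  -- saturation across C
  have hout : flowOut E f C = cutCap E w' C := by
    have h1 := value_eq_out_sub_in hfmax'.1 hcutC
    have h2 := flowOut_le_cutCap hfmax'.1 C
    have h3 := flowIn_nonneg hfmax'.1 C
    rw [hvalM, hcapC] at *
    linarith
  have hsum : ∑ a ∈ E.filter (fun a => a.1 ∈ C ∧ a.2 ∉ C), (w' a - f a) = 0 := by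
    rw [Finset.sum_sub_distrib]
    have : cutCap E w' C = ∑ a ∈ E.filter (fun a => a.1 ∈ C ∧ a.2 ∉ C), w' a := rfl
    rw [← this, ← hout]
    simp [flowOut]
  have hsat := (Finset.sum_eq_zero_iff_of_nonneg fun a ha =>
    sub_nonneg.2 (hfmax'.1.le_cap a (Finset.mem_filter.1 ha).1)).1 hsum
  have he'mem : e' ∈ E.filter (fun a => a.1 ∈ C ∧ a.2 ∉ C) :=
    Finset.mem_filter.2 ⟨he', hcon'.1, hcon'.2⟩
  have h0 := hsat e' he'mem
  have hw'e' : w' e' = w e' := Function.update_of_ne hne' _ _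
  linarith
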